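/- With notation as above (μ dominant minuscule, w = t_λ w̄ μ-admissible, w_λ the minimal coset representative of t_λ W), there is a bijection between the set of paths from w to t_λ in the Bruhat graph of the affine Weyl group and the set of paths from w_λ⁻¹ w̄ to w_λ⁻¹ in the Bruhat graph of the finite Weyl group W, which preserves the edge sets (and hence edge orderings with respect to any reflection ordering). -/

import Mathlib

open CoxeterSystem

section SEDevelopment

open List

set_option linter.unusedSectionVars false

variable {B W : Type*} [Group W] [DecidableEq W] {M : CoxeterMatrix B} (cs : CoxeterSystem M W)

local prefix:100 "s" => cs.simple
local prefix:100 "π" => cs.wordProd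
local prefix:100 "ℓ" => cs.length
local prefix:100 "ris" => cs.rightInvSeq
local prefix:100 "lis" => cs.leftInvSeq

namespace SE

/-- the sign-permutation generator -/
def pmFun (i : B) : W × ℤˣ → W × ℤˣ :=
  fun p => (s i * p.1 * s i, if p.1 = s i then -p.2 else p.2)

lemma simple_conj_cancel (i : B) (x : W) : s i * (s i * x * s i) * s i = x := by
  have h := cs.simple_mul_simple_self i
  calc s i * (s i * x * s i) * s i = (s i * s i) * x * (s i * s i) := by group
  _ = x := by rw [h]; group

lemma pmFun_invol (i : B) : Function.Involutive (pmFun cs i) := by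
  intro p
  show (s i * (s i * p.1 * s i) * s i,
    if (s i * p.1 * s i) = s i then -(if p.1 = s i then -p.2 else p.2)
      else (if p.1 = s i then -p.2 else p.2)) = p
  by_cases h : p.1 = s i
  · have h1 : s i * p.1 * s i = s i := by
      rw [h, cs.simple_mul_simple_self, one_mul]
    rw [simple_conj_cancel cs i, if_pos h1, if_pos h, neg_neg, Prod.mk.eta]
  · have h2 : s i * p.1 * s i ≠ s i := by
      intro hc
      apply h
      have := congrArg (fun z => s i * z * s i) hc
      simpa [simple_conj_cancel cs i, cs.simple_mul_simple_self] using this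
    rw [simple_conj_cancel cs i, if_neg h2, if_neg h, Prod.mk.eta]

def pm (i : B) : Equiv.Perm (W × ℤˣ) := (pmFun_invol cs i).toPerm

lemma pm_apply (i : B) (p : W × ℤˣ) :
    pm cs i p = (s i * p.1 * s i, if p.1 = s i then -p.2 else p.2) := rfl

/-- Sign formula for products of `pm` along a word. -/
lemma prod_pm_apply (ω : List B) (p : W × ℤˣ) :
    ((ω.map (pm cs)).prod) p
      = (π ω * p.1 * (π ω)⁻¹, (-1 : ℤˣ) ^ ((ris ω).count p.1) * p.2) := by
  induction ω generalizing p with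
  | nil => simp
  | cons i ω ih =>
    rw [map_cons, prod_cons, Equiv.Perm.mul_apply, ih p, pm_apply]
    rw [rightInvSeq]
    have hc : (π ω * p.1 * (π ω)⁻¹ = s i) ↔ (p.1 = (π ω)⁻¹ * s i * π ω) := by
      constructor
      · intro h; rw [← h]; group
      · intro h; rw [h]; group
    have hfst : s i * (π ω * p.1 * (π ω)⁻¹) * s i = π (i :: ω) * p.1 * (π (i :: ω))⁻¹ := by
      rw [wordProd_cons, mul_inv_rev, cs.inv_simple]; group
    by_cases h : p.1 = (π ω)⁻¹ * s i * π ω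
    · rw [if_pos (hc.mpr h)]
      simp only [Prod.mk.injEq]
      refine ⟨hfst, ?_⟩
      have : ((π ω)⁻¹ * s i * π ω :: ris ω).count p.1 = (ris ω).count p.1 + 1 := by
        simp [List.count_cons, h]
      rw [this, pow_succ, mul_neg_one, neg_mul]
    · rw [if_neg (fun hh => h (hc.mp hh))]
      simp only [Prod.mk.injEq]
      refine ⟨hfst, ?_⟩
      have : ((π ω)⁻¹ * s i * π ω :: ris ω).count p.1 = (ris ω).count p.1 := by
        simp only [List.count_cons, beq_iff_eq]
        rw [if_neg (fun hh => h hh.symm), add_zero]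
      rw [this]


lemma simple_mul_pow (i i' : B) (a : ℕ) :
    s i' * (s i * s i') ^ a = (s i' * s i) ^ a * s i' := by
  induction a with
  | zero => simp
  | succ a ih =>
    calc s i' * (s i * s i') ^ (a + 1)
        = (s i' * s i) * (s i' * (s i * s i') ^ a) := by
          rw [pow_succ']; simp [mul_assoc]
      _ = (s i' * s i) * ((s i' * s i) ^ a * s i') := by rw [ih]
      _ = (s i' * s i) ^ (a + 1) * s i' := by rw [pow_succ']; simp [mul_assoc]

lemma inv_simple_mul (i i' : B) : (s i * s i')⁻¹ = s i' * s i := by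
  rw [mul_inv_rev, cs.inv_simple, cs.inv_simple]

/-- The right inversion sequence of an alternating word. -/
lemma ris_alternating (i i' : B) (m : ℕ) :
    ris (alternatingWord i i' m)
      = (((List.range m).map (fun k => (s i' * s i) ^ k * s i')).reverse) := by
  induction m with
  | zero => simp [alternatingWord]
  | succ m ih =>
    rw [alternatingWord_succ', rightInvSeq, ih]
    rw [List.range_succ, List.map_append, List.reverse_append]
    simp only [List.map_cons, List.map_nil, List.reverse_cons, List.reverse_nil,
      List.nil_append, List.cons_append, List.singleton_append]
    congr 1
    rw [prod_alternatingWord_eq_mul_pow]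
    by_cases hm : Even m
    · rw [if_pos hm, if_pos hm, one_mul]
      obtain ⟨a, ha⟩ := hm
      have h2 : m / 2 = a := by omega
      rw [h2]
      calc ((s i * s i') ^ a)⁻¹ * s i' * (s i * s i') ^ a
          = ((s i * s i')⁻¹) ^ a * (s i' * (s i * s i') ^ a) := by
            rw [inv_pow, mul_assoc]
        _ = (s i' * s i) ^ a * ((s i' * s i) ^ a * s i') := by
            rw [inv_simple_mul, simple_mul_pow]
        _ = (s i' * s i) ^ (a + a) * s i' := by rw [← mul_assoc, ← pow_add]
        _ = (s i' * s i) ^ m * s i' := by rw [← ha]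
    · obtain ⟨a, ha⟩ := Nat.not_even_iff_odd.mp hm
      have h2 : m / 2 = a := by omega
      rw [if_neg hm, if_neg hm, h2]
      calc (s i' * (s i * s i') ^ a)⁻¹ * s i * (s i' * (s i * s i') ^ a)
          = ((s i * s i')⁻¹) ^ a * ((s i' * s i) * (s i' * (s i * s i') ^ a)) := by
            rw [mul_inv_rev, cs.inv_simple, inv_pow]; simp [mul_assoc]
        _ = (s i' * s i) ^ a * ((s i' * s i) * ((s i' * s i) ^ a * s i')) := by
            rw [inv_simple_mul, simple_mul_pow]
        _ = (s i' * s i) ^ (a + 1 + a) * s i' := by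
            rw [pow_add, pow_add, pow_one]; simp [mul_assoc]
        _ = (s i' * s i) ^ m * s i' := by congr 2; omega

lemma prod_pm_alternating (i i' : B) (m : ℕ) :
    (pm cs i * pm cs i') ^ m = ((alternatingWord i i' (2 * m)).map (pm cs)).prod := by
  induction m with
  | zero => simp [alternatingWord]
  | succ m ih =>
    have h1 : 2 * (m + 1) = (2 * m + 1) + 1 := by ring
    rw [h1, alternatingWord_succ', alternatingWord_succ']
    have h2 : ¬ Even (2 * m + 1) := by simp [Nat.even_add_one, parity_simps]
    have h3 : Even (2 * m) := ⟨m, by ring⟩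
    rw [if_neg h2, if_pos h3]
    rw [List.map_cons, List.map_cons, List.prod_cons, List.prod_cons, ← ih]
    rw [pow_succ']
    rw [mul_assoc]

lemma pm_liftable : M.IsLiftable (pm cs) := by
  intro i i'
  rw [prod_pm_alternating]
  apply Equiv.ext
  intro p
  rw [prod_pm_apply]
  have hπ : π (alternatingWord i i' (2 * M i i')) = 1 := by
    rw [prod_alternatingWord_eq_mul_pow, if_pos ⟨M i i', by ring⟩, one_mul]
    have : 2 * M i i' / 2 = M i i' := by omega
    rw [this, cs.simple_mul_simple_pow]
  have hcount : Even ((ris (alternatingWord i i' (2 * M i i'))).count p.1) := by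
    rw [ris_alternating, List.count_reverse]
    have h2 : 2 * M i i' = M i i' + M i i' := by ring
    rw [h2, List.range_add, List.map_append, List.count_append]
    have : (List.map (fun k => (s i' * s i) ^ k * s i')
        (List.map (fun k => M i i' + k) (List.range (M i i'))))
        = List.map (fun k => (s i' * s i) ^ k * s i') (List.range (M i i')) := by
      rw [List.map_map]
      apply List.map_congr_left
      intro k _
      show (s i' * s i) ^ (M i i' + k) * s i' = (s i' * s i) ^ k * s i'
      rw [pow_add, cs.simple_mul_simple_pow', one_mul]
    rw [this]
    exact ⟨_, rfl⟩
  rw [hπ, hcount.neg_one_pow]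
  simp

noncomputable def P : W →* Equiv.Perm (W × ℤˣ) := cs.lift ⟨pm cs, pm_liftable cs⟩

lemma P_wordProd (ω : List B) : P cs (π ω) = ((ω.map (pm cs)).prod) := by
  induction ω with
  | nil => simp [wordProd_nil]
  | cons i ω ih =>
    rw [wordProd_cons, map_mul, ih, List.map_cons, List.prod_cons]
    congr 1
    exact cs.lift_apply_simple (pm_liftable cs) i

/-- Parity of the number of occurrences of `t` in the right inversion sequence only
depends on the product of the word. -/
lemma parity_invariant {ω₁ ω₂ : List B} (h : π ω₁ = π ω₂) (t : W) :
    ((-1 : ℤˣ) ^ ((ris ω₁).count t)) = ((-1 : ℤˣ) ^ ((ris ω₂).count t)) := by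
  have h2 : P cs (π ω₁) = P cs (π ω₂) := by rw [h]
  rw [P_wordProd, P_wordProd] at h2
  have h3 := congrArg (fun (f : Equiv.Perm (W × ℤˣ)) => (f (t, 1)).2) h2
  simpa [prod_pm_apply] using h3

lemma ris_append (α β : List B) :
    ris (α ++ β) = (ris α).map (fun x => (π β)⁻¹ * x * (π β)) ++ ris β := by
  induction α with
  | nil => simp
  | cons i α ih =>
    rw [List.cons_append, rightInvSeq, rightInvSeq, ih, List.map_cons, List.cons_append]
    congr 1
    rw [wordProd_append, mul_inv_rev]
    group

lemma lis_eq_map_ris (ω : List B) :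
    lis ω = (ris ω).map (fun x => (π ω) * x * (π ω)⁻¹) := by
  induction ω with
  | nil => simp
  | cons i ω ih =>
    rw [leftInvSeq, rightInvSeq, ih, List.map_cons, List.map_map]
    congr 1
    · rw [wordProd_cons, mul_inv_rev, cs.inv_simple]
      simp [mul_assoc, cs.simple_mul_simple_self]
    · apply List.map_congr_left
      intro x _
      show s i * (π ω * x * (π ω)⁻¹) * (s i)⁻¹ = π (i :: ω) * x * (π (i :: ω))⁻¹
      rw [wordProd_cons, mul_inv_rev, cs.inv_simple]
      group

/-- The reflection `t = π υ * s i * (π υ)⁻¹` occurs an odd number of times in the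
right inversion sequence of the palindromic word `υ ++ i :: υ.reverse`. -/
lemma count_palindrome_odd (υ : List B) (i : B) :
    Odd (((ris (υ ++ i :: υ.reverse)).count (π υ * s i * (π υ)⁻¹))) := by
  set t : W := π υ * s i * (π υ)⁻¹ with ht
  rw [ris_append]
  rw [List.count_append]
  have hπ : π (i :: υ.reverse) = s i * (π υ)⁻¹ := by
    rw [wordProd_cons, wordProd_reverse]
  have hhead : rightInvSeq cs (i :: υ.reverse) = t :: ris (υ.reverse) := by
    rw [rightInvSeq, wordProd_reverse, inv_inv, ht]
  rw [hhead, List.count_cons_self]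
  have hinj : ∀ c : W, Function.Injective (fun x : W => c⁻¹ * x * c) := by
    intro c a b hab
    dsimp at hab
    exact mul_left_cancel (mul_right_cancel hab)
  have hA : (((ris υ).map (fun x => (π (i :: υ.reverse))⁻¹ * x * (π (i :: υ.reverse)))).count t)
      = (ris υ).count (s i) := by
    have key : (fun x : W => (π (i :: υ.reverse))⁻¹ * x * (π (i :: υ.reverse))) (s i) = t := by
      rw [hπ, ht]
      simp [mul_assoc, mul_inv_rev, cs.inv_simple, cs.simple_mul_simple_self]
    rw [← key]
    exact List.count_map_of_injective _ _ (hinj _) _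
  have hB : (ris υ.reverse).count t = (ris υ).count (s i) := by
    rw [rightInvSeq_reverse, List.count_reverse, lis_eq_map_ris]
    have key : (fun x : W => π υ * x * (π υ)⁻¹) (s i) = t := rfl
    have hinj2 : Function.Injective (fun x : W => π υ * x * (π υ)⁻¹) := by
      intro a b hab
      dsimp at hab
      exact mul_left_cancel (mul_right_cancel hab)
    rw [← key]
    exact List.count_map_of_injective _ _ hinj2 _
  rw [hA, hB]
  exact ⟨(ris υ).count (s i), by omega⟩

/-- **Strong exchange property**. -/
theorem strong_exchange {ω : List B} {t : W} (ht : cs.IsReflection t)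
    (h : ℓ (π ω * t) < ℓ (π ω)) : t ∈ ris ω := by
  obtain ⟨u, i, htui⟩ := ht
  have ht2 : t * t = 1 := CoxeterSystem.IsReflection.mul_self ⟨u, i, htui⟩
  obtain ⟨υ, hυ⟩ := cs.wordProd_surjective u
  obtain ⟨α, hαred, hα⟩ := cs.exists_reduced_word' (π ω * t)
  have hτ : π (υ ++ i :: υ.reverse) = t := by
    rw [wordProd_append, wordProd_cons, wordProd_reverse, hυ, htui, mul_assoc]
  have hαt : π (α ++ (υ ++ i :: υ.reverse)) = π ω := by
    rw [wordProd_append, hτ, ← hα, mul_assoc, ht2, mul_one]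
  have hpar := parity_invariant cs hαt t
  rw [ris_append, List.count_append, hτ] at hpar
  have hA : ((ris α).map (fun x => t⁻¹ * x * t)).count t = (ris α).count t := by
    have hinj : Function.Injective (fun x : W => t⁻¹ * x * t) := by
      intro a b hab
      dsimp at hab
      exact mul_left_cancel (mul_right_cancel hab)
    have h0 := List.count_map_of_injective (ris α) (fun x : W => t⁻¹ * x * t) hinj t
    rw [show t⁻¹ * t * t = t by group] at h0
    exact h0
  have hzero : (ris α).count t = 0 := by
    by_contra hc
    have hmem : t ∈ ris α := List.count_pos_iff.mp (Nat.pos_of_ne_zero hc)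
    have hinv := cs.isRightInversion_of_mem_rightInvSeq hαred hmem
    have h2 := hinv.2
    rw [← hα, mul_assoc, ht2, mul_one] at h2
    omega
  have hodd : Odd (((ris α).map (fun x => t⁻¹ * x * t)).count t
      + (ris (υ ++ i :: υ.reverse)).count t) := by
    rw [hA, hzero, zero_add]
    have := count_palindrome_odd cs υ i
    rw [hυ, ← htui] at this
    exact this
  rw [hodd.neg_one_pow] at hpar
  have hoddω : Odd ((ris ω).count t) := by
    by_contra hc
    rw [(Nat.not_odd_iff_even.mp hc).neg_one_pow] at hpar
    exact absurd hpar.symm (by decide)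
  refine List.count_pos_iff.mp (Nat.pos_of_ne_zero ?_)
  intro hzero2
  rw [hzero2] at hoddω
  simp [Nat.odd_iff] at hoddω

/-- Exchange: multiplying by a length-decreasing reflection deletes a letter. -/
lemma exchange_exists {ω : List B} {t : W} (ht : cs.IsReflection t)
    (h : ℓ (π ω * t) < ℓ (π ω)) :
    ∃ j < ω.length, π ω * t = π (ω.eraseIdx j) := by
  have hmem := strong_exchange cs ht h
  obtain ⟨j, hj, hje⟩ := List.mem_iff_getElem.mp hmem
  rw [cs.length_rightInvSeq] at hj
  refine ⟨j, hj, ?_⟩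
  have h1 : (ris ω).getD j 1 = t := by
    rw [List.getD_eq_getElem _ _ (by rwa [cs.length_rightInvSeq])]
    exact hje
  rw [← h1]
  exact cs.wordProd_mul_getD_rightInvSeq ω j

lemma exists_reduced_sublist : ∀ (n : ℕ) (ω : List B), ω.length = n →
    ∃ ω', ω' ⊆ ω ∧ cs.IsReduced ω' ∧ π ω' = π ω := by
  intro n
  induction n using Nat.strong_induction_on with
  | _ n IH =>
    intro ω hn
    by_cases hred : cs.IsReduced ω
    · exact ⟨ω, List.Subset.refl ω, hred, rfl⟩
    · classical
      have hωne : ω ≠ [] := by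
        intro hc
        exact hred (by simp [hc, CoxeterSystem.IsReduced])
      have hlen1 : 1 ≤ ω.length := by
        cases ω with
        | nil => exact absurd rfl hωne
        | cons a l => simp
      have hex : ∃ j, ¬ cs.IsReduced (ω.take (j+1)) := by
        refine ⟨ω.length - 1, ?_⟩
        have : ω.length - 1 + 1 = ω.length := by omega
        rw [this, List.take_length]
        exact hred
      let j := Nat.find hex
      have hjspec : ¬ cs.IsReduced (ω.take (j+1)) := Nat.find_spec hex
      have hjle : j ≤ ω.length - 1 := Nat.find_le (by
        have : ω.length - 1 + 1 = ω.length := by omega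
        rw [this, List.take_length]
        exact hred)
      have hjlt : j < ω.length := by omega
      have hredj : cs.IsReduced (ω.take j) := by
        match hj : j with
        | 0 => simp [CoxeterSystem.IsReduced]
        | (k+1) =>
          have := Nat.find_min hex (m := k) (by omega)
          simpa using this
      have htake : ω.take (j+1) = ω.take j ++ [ω[j]] := by
        rw [List.take_succ]
        congr
        rw [List.getElem?_eq_getElem hjlt]
        rfl
      have hlj : ℓ (π (ω.take j)) = j := by
        have := hredj
        rw [CoxeterSystem.IsReduced] at this
        rw [this, List.length_take]
        omega
      have hdrop : ℓ (π (ω.take j) * s ω[j]) < ℓ (π (ω.take j)) := by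
        rcases cs.length_mul_simple (π (ω.take j)) ω[j] with hcase | hcase
        · exfalso
          apply hjspec
          rw [CoxeterSystem.IsReduced, htake, wordProd_append, wordProd_singleton,
            hcase, hlj]
          simp [List.length_take]
          omega
        · omega
      obtain ⟨k, hk, hkeq⟩ := exchange_exists cs (cs.isReflection_simple ω[j]) hdrop
      set ω'' := ((ω.take j).eraseIdx k) ++ ω.drop (j+1) with hω''
      have hπ : π ω'' = π ω := by
        rw [hω'', wordProd_append, ← hkeq, ← wordProd_singleton (cs := cs) (i := ω[j])]
        rw [← wordProd_append, ← htake, ← wordProd_append, List.take_append_drop]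
      have hlen'' : ω''.length = n - 2 := by
        have e1 := List.length_eraseIdx_add_one hk
        have e2 : (ω.take j).length = j := by rw [List.length_take]; omega
        rw [hω'', List.length_append, List.length_drop]
        omega
      obtain ⟨ω', hsub, hred', hπ'⟩ := IH (n-2) (by omega) ω'' hlen''
      refine ⟨ω', ?_, hred', by rw [hπ', hπ]⟩
      intro x hx
      have hx'' := hsub hx
      rw [hω''] at hx''
      rcases List.mem_append.mp hx'' with h1 | h1
      · exact List.take_subset _ _ (List.eraseIdx_subset h1)
      · exact List.drop_subset _ _ h1

variable (J : Set B)

lemma wordProd_mem_closure {ω : List B} (hω : ∀ b ∈ ω, b ∈ J) :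
    π ω ∈ Subgroup.closure (cs.simple '' J) := by
  induction ω with
  | nil =>
    rw [wordProd_nil]
    exact one_mem _
  | cons i ω ih =>
    rw [wordProd_cons]
    exact mul_mem (Subgroup.subset_closure ⟨i, hω i (by simp), rfl⟩)
      (ih (fun b hb => hω b (by simp [hb])))

lemma exists_word_of_mem_closure {x : W}
    (hx : x ∈ Subgroup.closure (cs.simple '' J)) :
    ∃ ω : List B, (∀ b ∈ ω, b ∈ J) ∧ π ω = x := by
  induction hx using Subgroup.closure_induction with
  | mem y hy =>
    obtain ⟨j, hj, rfl⟩ := hy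
    exact ⟨[j], by simpa using hj, by simp [wordProd_singleton]⟩
  | one => exact ⟨[], by simp, by simp [wordProd_nil]⟩
  | mul y z _ _ ihy ihz =>
    obtain ⟨ω₁, h₁, rfl⟩ := ihy
    obtain ⟨ω₂, h₂, rfl⟩ := ihz
    exact ⟨ω₁ ++ ω₂, by
      intro b hb
      rcases List.mem_append.mp hb with h | h
      exacts [h₁ b h, h₂ b h], by rw [wordProd_append]⟩
  | inv y _ ihy =>
    obtain ⟨ω₁, h₁, rfl⟩ := ihy
    exact ⟨ω₁.reverse, fun b hb => h₁ b (List.mem_reverse.mp hb), by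
      rw [wordProd_reverse]⟩

lemma exists_reduced_word_of_mem_closure {x : W}
    (hx : x ∈ Subgroup.closure (cs.simple '' J)) :
    ∃ ω : List B, (∀ b ∈ ω, b ∈ J) ∧ cs.IsReduced ω ∧ π ω = x := by
  obtain ⟨ω, hωJ, hωx⟩ := exists_word_of_mem_closure cs J hx
  obtain ⟨ω', hsub, hred, hπ⟩ := exists_reduced_sublist cs ω.length ω rfl
  exact ⟨ω', fun b hb => hωJ b (hsub hb), hred, by rw [hπ, hωx]⟩

/-- Length additivity for minimal coset representatives. -/
lemma length_min_coset_add (tl wl : W)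
    (hwl : wl ∈ Subgroup.closure (cs.simple '' J))
    (hmin : ∀ x ∈ Subgroup.closure (cs.simple '' J),
      ℓ (tl * wl) ≤ ℓ (tl * x)) :
    ∀ (n : ℕ) (x : W), x ∈ Subgroup.closure (cs.simple '' J) → ℓ x = n →
      ℓ (tl * wl * x) = ℓ (tl * wl) + ℓ x := by
  intro n
  induction n using Nat.strong_induction_on with
  | _ n IH =>
    intro x hx hlx
    obtain ⟨ω, hωJ, hωred, hωx⟩ := exists_reduced_word_of_mem_closure cs J hx
    rcases List.eq_nil_or_concat ω with rfl | ⟨δ, b, rfl⟩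
    · have : x = 1 := by rw [← hωx, wordProd_nil]
      simp [this]
    · have hbJ : b ∈ J := hωJ b (by simp)
      have hδJ : ∀ c ∈ δ, c ∈ J := fun c hc => hωJ c (by simp [hc])
      set y : W := π δ with hy
      have hyH : y ∈ Subgroup.closure (cs.simple '' J) :=
        wordProd_mem_closure cs J hδJ
      have hδred : cs.IsReduced δ := by
        have h0 := hωred.take δ.length
        rw [List.concat_eq_append, List.take_left] at h0
        exact h0
      have hly : ℓ y = δ.length := hδred
      have hlx' : ℓ x = δ.length + 1 := by
        rw [← hωx, hωred, List.length_concat]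
      have hIH : ℓ (tl * wl * y) = ℓ (tl * wl) + ℓ y :=
        IH (δ.length) (by omega) y hyH hly
      have hxy : x = y * s b := by
        rw [← hωx, wordProd_concat, hy]
      rcases cs.length_mul_simple (tl * wl * y) b with hcase | hcase
      · rw [hxy, ← mul_assoc, hcase, hIH, ← hxy, hlx', hly]
        omega
      · -- contradiction via exchange
        exfalso
        obtain ⟨γ, hγred, hγ⟩ := cs.exists_reduced_word' (tl * wl)
        have h7 : ℓ (tl * wl) = γ.length := by rw [hγ]; exact hγred
        have hβred : cs.IsReduced (γ ++ δ) := by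
          have hlen : (γ ++ δ).length = ℓ (tl * wl) + ℓ y := by
            rw [List.length_append, h7, hly]
          rw [CoxeterSystem.IsReduced, wordProd_append, ← hγ, ← hy, hIH, hlen]
        have hβdrop : ℓ (π (γ ++ δ) * s b) < ℓ (π (γ ++ δ)) := by
          rw [wordProd_append, ← hγ, ← hy]
          omega
        obtain ⟨k, hk, hkeq⟩ := exchange_exists cs (cs.isReflection_simple b) hβdrop
        rw [List.length_append] at hk
        rw [wordProd_append, ← hγ, ← hy] at hkeq
        by_cases hkγ : k < γ.length
        · -- erase in γ part: contradicts minimality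
          rw [List.eraseIdx_append_of_lt_length hkγ, wordProd_append, ← hy] at hkeq
          have h1 : tl * wl * y * s b * y⁻¹ = π (γ.eraseIdx k) := by
            rw [hkeq]; group
          have h2 : wl * (y * s b * y⁻¹) ∈ Subgroup.closure (cs.simple '' J) := by
            refine mul_mem hwl (mul_mem (mul_mem hyH ?_) (inv_mem hyH))
            exact Subgroup.subset_closure ⟨b, hbJ, rfl⟩
          have h3 := hmin _ h2
          have h4 : tl * (wl * (y * s b * y⁻¹)) = π (γ.eraseIdx k) := by
            rw [← h1]; group
          rw [h4] at h3
          have h5 : ℓ (π (γ.eraseIdx k)) ≤ (γ.eraseIdx k).length :=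
            cs.length_wordProd_le _
          have h6 := List.length_eraseIdx_add_one hkγ
          omega
        · -- erase in δ part: contradicts reducedness of x's word
          have hkγ' : γ.length ≤ k := by omega
          rw [List.eraseIdx_append_of_length_le hkγ', wordProd_append, ← hγ] at hkeq
          have h1 : y * s b = π (δ.eraseIdx (k - γ.length)) := by
            apply mul_left_cancel (a := tl * wl)
            rw [← mul_assoc]
            exact hkeq
          have h2 : ℓ x ≤ (δ.eraseIdx (k - γ.length)).length := by
            rw [hxy, h1]
            exact cs.length_wordProd_le _
          have h6 := List.length_eraseIdx_add_one (show k - γ.length < δ.length by omega)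
          omega

end SE

end SEDevelopment

/-- A directed path in the Bruhat graph of a Coxeter system from `u` to `v`,
recorded by its list of edge reflections `ts`. -/
def IsBruhatPath {B W : Type*} [Group W] {M : CoxeterMatrix B} (cs : CoxeterSystem M W)
    (u v : W) (ts : List W) : Prop :=
  (∀ t ∈ ts, cs.IsReflection t) ∧ u * ts.prod = v ∧
    ∀ k < ts.length,
      cs.length (u * (ts.take k).prod) < cs.length (u * (ts.take (k + 1)).prod)

/-- The Bruhat order on a Coxeter group. -/
def BruhatLE {B W : Type*} [Group W] {M : CoxeterMatrix B} (cs : CoxeterSystem M W)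
    (u v : W) : Prop :=
  Relation.ReflTransGen
    (fun a b => (∃ t, cs.IsReflection t ∧ b = a * t) ∧ cs.length a < cs.length b) u v

/-- With `μ` dominant minuscule, `w = t_λ·w̄` a `μ`-admissible
element of the affine Weyl group (so `w ≤ t_λ` in Bruhat order), `W` the finite
Weyl group (the standard parabolic subgroup generated by the simple reflections
indexed by `J`), and `w_λ = wl` the minimal coset representative of `t_λ W`
(so that `t_λ w_λ` has minimal length in `t_λ W`): since every edge reflection
of a Bruhat path from `w` to `t_λ` lies in `W` (hypothesis `hfin`, the previous
statement), there is a bijection — given by keeping the same list of edge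
reflections — between the Bruhat-graph paths from `w` to `t_λ` in the affine
Weyl group and the Bruhat-graph paths from `w_λ⁻¹·w̄` to `w_λ⁻¹` in the finite
Weyl group `W`, preserving edge sets (and hence edge orderings with respect to
any reflection ordering). -/
theorem stmt16 {B Waff : Type*} [Group Waff] {M : CoxeterMatrix B}
    (cs : CoxeterSystem M Waff) (J : Set B)
    (tl wb wl : Waff)
    (hwb : wb ∈ Subgroup.closure (cs.simple '' J))
    (hwl : wl ∈ Subgroup.closure (cs.simple '' J))
    (hmin : ∀ x ∈ Subgroup.closure (cs.simple '' J),
      cs.length (tl * wl) ≤ cs.length (tl * x))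
    (hadm : BruhatLE cs (tl * wb) tl)
    (hfin : ∀ ts : List Waff, IsBruhatPath cs (tl * wb) tl ts →
      ∀ t ∈ ts, t ∈ Subgroup.closure (cs.simple '' J)) :
    ∀ ts : List Waff,
      IsBruhatPath cs (tl * wb) tl ts ↔
        ((∀ t ∈ ts, t ∈ Subgroup.closure (cs.simple '' J)) ∧
          IsBruhatPath cs (wl⁻¹ * wb) wl⁻¹ ts) := by
  
  letI : DecidableEq Waff := Classical.decEq Waff
  have hadd : ∀ x ∈ Subgroup.closure (cs.simple '' J),
      cs.length (tl * wl * x) = cs.length (tl * wl) + cs.length x :=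
    fun x hx => SE.length_min_coset_add cs J tl wl hwl hmin (cs.length x) x hx rfl
  have hsplit : ∀ z : Waff, tl * wb * z = tl * wl * (wl⁻¹ * wb * z) := by
    intro z; group
  intro ts
  have haH : ∀ (hm : ∀ t ∈ ts, t ∈ Subgroup.closure (cs.simple '' J)) (m : ℕ),
      wl⁻¹ * wb * (ts.take m).prod ∈ Subgroup.closure (cs.simple '' J) := by
    intro hm m
    refine mul_mem (mul_mem (inv_mem hwl) hwb) ?_
    exact list_prod_mem (fun x hx => hm x (List.take_subset m ts hx))
  have hkey : ∀ (hm : ∀ t ∈ ts, t ∈ Subgroup.closure (cs.simple '' J)) (m : ℕ),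
      cs.length (tl * wb * (ts.take m).prod)
        = cs.length (tl * wl) + cs.length (wl⁻¹ * wb * (ts.take m).prod) := by
    intro hm m
    rw [hsplit]
    exact hadd _ (haH hm m)
  have hends : (tl * wb * ts.prod = tl) ↔ (wl⁻¹ * wb * ts.prod = wl⁻¹) := by
    constructor
    · intro h
      have h1 : wb * ts.prod = 1 := by
        apply mul_left_cancel (a := tl)
        rw [← mul_assoc, h, mul_one]
      rw [mul_assoc, h1, mul_one]
    · intro h
      have h1 : wb * ts.prod = 1 := by
        apply mul_left_cancel (a := wl⁻¹)
        rw [← mul_assoc, h, mul_one]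
      rw [mul_assoc, h1, mul_one]
  constructor
  · intro hpath
    have hmem := hfin ts hpath
    obtain ⟨hrefl, hend, hlen⟩ := hpath
    refine ⟨hmem, hrefl, hends.mp hend, ?_⟩
    intro k hk
    have h1 := hlen k hk
    rw [hkey hmem k, hkey hmem (k+1)] at h1
    omega
  · rintro ⟨hmem, hrefl, hend, hlen⟩
    refine ⟨hrefl, hends.mpr hend, ?_⟩
    intro k hk
    have h1 := hlen k hk
    rw [hkey hmem k, hkey hmem (k+1)]
    omega
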